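/- Let χ₁ and χ₂ be shape Wilf equivalent signed permutation matrices and let χ be any signed permutation matrix. Set θ = [[χ₁,0],[0,χ]] and ω = [[χ₂,0],[0,χ]] (block diagonal matrices). Then for every Young diagram λ and every pair of subsets R of the rows of λ and C of the columns of λ, the number of θ-avoiding sparse fillings of λ whose set of rows containing a nonzero entry is exactly R and whose set of columns containing a nonzero entry is exactly C equals the number of ω-avoiding sparse fillings of λ with the same property. In particular, θ and ω are shape Wilf equivalent. -/
import Mathlib


open Matrix

/-- A signed permutation matrix: entries in {0,1,-1}, with exactly one nonzero
entry in each row and each column. -/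
def IsSignedPermMatrix {n : ℕ} (M : Matrix (Fin n) (Fin n) ℤ) : Prop :=
  (∀ i j, M i j = 0 ∨ M i j = 1 ∨ M i j = -1) ∧
  (∀ i, ∃! j, M i j ≠ 0) ∧
  (∀ j, ∃! i, M i j ≠ 0)

/-- `M` contains the pattern `τ`: some `k×k` submatrix of `M`, taken with rows
and columns in increasing order, equals `τ`. -/
def ContainsPattern {n k : ℕ} (M : Matrix (Fin n) (Fin n) ℤ)
    (τ : Matrix (Fin k) (Fin k) ℤ) : Prop :=
  ∃ r c : Fin k → Fin n, StrictMono r ∧ StrictMono c ∧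
    ∀ a b, M (r a) (c b) = τ a b

/-- Block diagonal matrix [[A,0],[0,B]]. -/
def blockDiag2 {a b : ℕ} (A : Matrix (Fin a) (Fin a) ℤ) (B : Matrix (Fin b) (Fin b) ℤ) :
    Matrix (Fin (a + b)) (Fin (a + b)) ℤ :=
  Matrix.reindex finSumFinEquiv finSumFinEquiv
    (Matrix.fromBlocks A (0 : Matrix (Fin a) (Fin b) ℤ) (0 : Matrix (Fin b) (Fin a) ℤ) B)

/-- Block diagonal matrix with three blocks. -/
def blockDiag3 {a b c : ℕ} (A : Matrix (Fin a) (Fin a) ℤ) (B : Matrix (Fin b) (Fin b) ℤ)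
    (C : Matrix (Fin c) (Fin c) ℤ) : Matrix (Fin (a + b + c)) (Fin (a + b + c)) ℤ :=
  blockDiag2 (blockDiag2 A B) C

/-- Block antidiagonal matrix [[0,A],[B,0]]. -/
def antiBlock2 {a b : ℕ} (A : Matrix (Fin a) (Fin a) ℤ) (B : Matrix (Fin b) (Fin b) ℤ) :
    Matrix (Fin (a + b)) (Fin (a + b)) ℤ :=
  Matrix.reindex finSumFinEquiv (finSumFinEquiv.trans (finCongr (Nat.add_comm b a)))
    (Matrix.fromBlocks (0 : Matrix (Fin a) (Fin b) ℤ) A B (0 : Matrix (Fin b) (Fin a) ℤ))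

/-- For a signed permutation matrix σ, the involution σ' = [[0,σ],[σᵗ,0]]. -/
def primePat {k : ℕ} (σ : Matrix (Fin k) (Fin k) ℤ) :
    Matrix (Fin (k + k)) (Fin (k + k)) ℤ :=
  Matrix.reindex finSumFinEquiv finSumFinEquiv
    (Matrix.fromBlocks (0 : Matrix (Fin k) (Fin k) ℤ) σ σ.transpose
      (0 : Matrix (Fin k) (Fin k) ℤ))

/-- For a signed permutation matrix σ, the involution σ'' = [[0,0,σ],[0,1,0],[σᵗ,0,0]]. -/
def doublePrimePat {k : ℕ} (σ : Matrix (Fin k) (Fin k) ℤ) :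
    Matrix (Fin (k + (1 + k))) (Fin (k + (1 + k))) ℤ :=
  Matrix.reindex ((Equiv.sumCongr (Equiv.refl (Fin k)) finSumFinEquiv).trans finSumFinEquiv)
    ((Equiv.sumCongr (Equiv.refl (Fin k)) finSumFinEquiv).trans finSumFinEquiv)
    (Matrix.fromBlocks
      (0 : Matrix (Fin k) (Fin k) ℤ)
      (Matrix.of fun (i : Fin k) (j : Fin 1 ⊕ Fin k) =>
        Sum.elim (fun _ => (0 : ℤ)) (fun j' => σ i j') j)
      (Matrix.of fun (i : Fin 1 ⊕ Fin k) (j : Fin k) =>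
        Sum.elim (fun _ => (0 : ℤ)) (fun i' => σ.transpose i' j) i)
      (Matrix.fromBlocks (1 : Matrix (Fin 1) (Fin 1) ℤ) 0 0 (0 : Matrix (Fin k) (Fin k) ℤ)))

/-- β_k, the antidiagonal k×k permutation matrix (pattern k(k-1)…1). -/
def betaMat (k : ℕ) : Matrix (Fin k) (Fin k) ℤ :=
  Matrix.of fun i j => if (i : ℕ) + (j : ℕ) + 1 = k then 1 else 0

/-- |SI_n(τ)|: the number of τ-avoiding signed involutions of size n. -/
noncomputable def SIAvoidCount (n : ℕ) {k : ℕ} (τ : Matrix (Fin k) (Fin k) ℤ) : ℕ :=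
  {M : Matrix (Fin n) (Fin n) ℤ |
    IsSignedPermMatrix M ∧ M.IsSymm ∧ ¬ ContainsPattern M τ}.ncard

/-- |B_n(τ)|: the number of τ-avoiding signed permutations of size n. -/
noncomputable def BAvoidCount (n : ℕ) {k : ℕ} (τ : Matrix (Fin k) (Fin k) ℤ) : ℕ :=
  {M : Matrix (Fin n) (Fin n) ℤ | IsSignedPermMatrix M ∧ ¬ ContainsPattern M τ}.ncard

/-- A sparse filling of a Young diagram: values in {0,1,-1}, supported on the
cells of the diagram, with at most one nonzero entry in each row and column. -/
def IsSparseFilling (μ : YoungDiagram) (f : ℕ × ℕ → ℤ) : Prop :=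
  (∀ p, f p ≠ 0 → p ∈ μ.cells) ∧
  (∀ p, f p = 0 ∨ f p = 1 ∨ f p = -1) ∧
  (∀ i, {j : ℕ | f (i, j) ≠ 0}.Subsingleton) ∧
  (∀ j, {i : ℕ | f (i, j) ≠ 0}.Subsingleton)

/-- A signed transversal of a Young diagram: a sparse filling with exactly one
nonzero entry in every (nonempty) row and column. -/
def IsSignedTransversal (μ : YoungDiagram) (f : ℕ × ℕ → ℤ) : Prop :=
  IsSparseFilling μ f ∧
  (∀ i, (∃ j, (i, j) ∈ μ.cells) → ∃ j, f (i, j) ≠ 0) ∧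
  (∀ j, (∃ i, (i, j) ∈ μ.cells) → ∃ i, f (i, j) ≠ 0)

/-- A filling of a Young diagram contains the pattern τ. -/
def YDContains (μ : YoungDiagram) (f : ℕ × ℕ → ℤ) {k : ℕ}
    (τ : Matrix (Fin k) (Fin k) ℤ) : Prop :=
  ∃ r c : Fin k → ℕ, StrictMono r ∧ StrictMono c ∧
    (∀ a b, (r a, c b) ∈ μ.cells) ∧ (∀ a b, f (r a, c b) = τ a b)

/-- Shape Wilf equivalence of two signed permutation matrices. -/
def ShapeWilfEquiv {k l : ℕ} (σ : Matrix (Fin k) (Fin k) ℤ)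
    (τ : Matrix (Fin l) (Fin l) ℤ) : Prop :=
  ∀ μ : YoungDiagram,
    {f : ℕ × ℕ → ℤ | IsSignedTransversal μ f ∧ ¬ YDContains μ f σ}.ncard =
    {f : ℕ × ℕ → ℤ | IsSignedTransversal μ f ∧ ¬ YDContains μ f τ}.ncard

namespace BW

open scoped Classical

noncomputable section

variable {m : ℕ}

def rowsupp (f : ℕ × ℕ → ℤ) : Set ℕ := {i | ∃ j, f (i, j) ≠ 0}
def colsupp (f : ℕ × ℕ → ℤ) : Set ℕ := {j | ∃ i, f (i, j) ≠ 0}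

/-- There is an occurrence of `χ` in `f` strictly southeast of `p`. -/
def SEOcc (χ : Matrix (Fin m) (Fin m) ℤ) (μ : YoungDiagram) (f : ℕ × ℕ → ℤ)
    (p : ℕ × ℕ) : Prop :=
  ∃ r c : Fin m → ℕ, StrictMono r ∧ StrictMono c ∧
    (∀ x y, (r x, c y) ∈ μ.cells) ∧ (∀ x y, f (r x, c y) = χ x y) ∧
    (∀ x, p.1 < r x) ∧ (∀ y, p.2 < c y)

def White (χ : Matrix (Fin m) (Fin m) ℤ) (μ : YoungDiagram) (f : ℕ × ℕ → ℤ) :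
    Set (ℕ × ℕ) := {p | p ∈ μ.cells ∧ SEOcc χ μ f p}

lemma seocc_lower {χ : Matrix (Fin m) (Fin m) ℤ} {μ : YoungDiagram} {f : ℕ × ℕ → ℤ}
    {p q : ℕ × ℕ} (hle : q ≤ p) (h : SEOcc χ μ f p) : SEOcc χ μ f q := by
  obtain ⟨r, c, hr, hc, hcell, hval, hr', hc'⟩ := h
  exact ⟨r, c, hr, hc, hcell, hval, fun x => lt_of_le_of_lt hle.1 (hr' x),
    fun y => lt_of_le_of_lt hle.2 (hc' y)⟩

def whiteYD (χ : Matrix (Fin m) (Fin m) ℤ) (μ : YoungDiagram) (f : ℕ × ℕ → ℤ) :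
    YoungDiagram where
  cells := μ.cells.filter (fun p => SEOcc χ μ f p)
  isLowerSet := by
    intro p q hle hp
    simp only [Finset.coe_filter, Set.mem_setOf_eq] at hp ⊢
    exact ⟨μ.isLowerSet hle hp.1, seocc_lower hle hp.2⟩

lemma mem_whiteYD {χ : Matrix (Fin m) (Fin m) ℤ} {μ : YoungDiagram} {f : ℕ × ℕ → ℤ}
    {p : ℕ × ℕ} : p ∈ (whiteYD χ μ f).cells ↔ p ∈ White χ μ f := by
  simp [whiteYD, White, Finset.mem_filter]

def whitePart (χ : Matrix (Fin m) (Fin m) ℤ) (μ : YoungDiagram) (f : ℕ × ℕ → ℤ) :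
    ℕ × ℕ → ℤ := fun p => if p ∈ White χ μ f then f p else 0

def combine (χ : Matrix (Fin m) (Fin m) ℤ) (μ : YoungDiagram) (f h : ℕ × ℕ → ℤ) :
    ℕ × ℕ → ℤ := fun p => if p ∈ White χ μ f then h p else f p

lemma whitePart_eq_of_mem {χ : Matrix (Fin m) (Fin m) ℤ} {μ : YoungDiagram}
    {f : ℕ × ℕ → ℤ} {p : ℕ × ℕ} (hp : p ∈ White χ μ f) : whitePart χ μ f p = f p :=
  if_pos hp

lemma whitePart_eq_zero {χ : Matrix (Fin m) (Fin m) ℤ} {μ : YoungDiagram}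
    {f : ℕ × ℕ → ℤ} {p : ℕ × ℕ} (hp : p ∉ White χ μ f) : whitePart χ μ f p = 0 :=
  if_neg hp

lemma combine_eq_of_mem {χ : Matrix (Fin m) (Fin m) ℤ} {μ : YoungDiagram}
    {f h : ℕ × ℕ → ℤ} {p : ℕ × ℕ} (hp : p ∈ White χ μ f) : combine χ μ f h p = h p :=
  if_pos hp

lemma combine_eq_of_notMem {χ : Matrix (Fin m) (Fin m) ℤ} {μ : YoungDiagram}
    {f h : ℕ × ℕ → ℤ} {p : ℕ × ℕ} (hp : p ∉ White χ μ f) : combine χ μ f h p = f p :=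
  if_neg hp

/-- The key "maximal occurrence" lemma: if every point of `W` sees an occurrence of
`χ` strictly to its southeast, then any point seeing an occurrence sees one that
entirely avoids `W`. -/
lemma seocc_avoid {χ : Matrix (Fin m) (Fin m) ℤ} {μ : YoungDiagram} {g : ℕ × ℕ → ℤ}
    {W : Set (ℕ × ℕ)} (hW : ∀ q ∈ W, SEOcc χ μ g q) {p : ℕ × ℕ}
    (hp : SEOcc χ μ g p) :
    ∃ r c : Fin m → ℕ, StrictMono r ∧ StrictMono c ∧
      (∀ x y, (r x, c y) ∈ μ.cells) ∧ (∀ x y, g (r x, c y) = χ x y) ∧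
      (∀ x, p.1 < r x) ∧ (∀ y, p.2 < c y) ∧ ∀ x y, (r x, c y) ∉ W := by
  rcases m with - | m'
  · obtain ⟨r, c, hr, hc, hcell, hval, hr', hc'⟩ := hp
    exact ⟨r, c, hr, hc, hcell, hval, hr', hc', fun x => x.elim0⟩
  · set S : Set ℕ := {n | ∃ r c : Fin (m' + 1) → ℕ, (StrictMono r ∧ StrictMono c ∧
      (∀ x y, (r x, c y) ∈ μ.cells) ∧ (∀ x y, g (r x, c y) = χ x y) ∧
      (∀ x, p.1 < r x) ∧ (∀ y, p.2 < c y)) ∧ r 0 + c 0 = n} with hS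
    have hne : S.Nonempty := by
      obtain ⟨r, c, hr, hc, hcell, hval, hr', hc'⟩ := hp
      exact ⟨r 0 + c 0, r, c, ⟨hr, hc, hcell, hval, hr', hc'⟩, rfl⟩
    have hbdd : BddAbove S := by
      refine ⟨μ.cells.sup (fun q => q.1 + q.2), ?_⟩
      rintro n ⟨r, c, ⟨-, -, hcell, -⟩, rfl⟩
      exact Finset.le_sup (f := fun q : ℕ × ℕ => q.1 + q.2) (hcell 0 0)
    obtain ⟨r, c, ⟨hr, hc, hcell, hval, hr', hc'⟩, hmax⟩ := Nat.sSup_mem hne hbdd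
    refine ⟨r, c, hr, hc, hcell, hval, hr', hc', ?_⟩
    intro x y hxy
    obtain ⟨r', c', hr2, hc2, hcell2, hval2, hr2', hc2'⟩ := hW _ hxy
    have hmem : r' 0 + c' 0 ∈ S := by
      refine ⟨r', c', ⟨hr2, hc2, hcell2, hval2, ?_, ?_⟩, rfl⟩
      · exact fun x' => lt_trans (hr' x) (hr2' x')
      · exact fun y' => lt_trans (hc' y) (hc2' y')
    have hle : r' 0 + c' 0 ≤ sSup S := le_csSup hbdd hmem
    have h1 : r 0 ≤ r x := hr.monotone (Fin.zero_le x)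
    have h2 : c 0 ≤ c y := hc.monotone (Fin.zero_le y)
    have h3 : r x < r' 0 := hr2' 0
    have h4 : c y < c' 0 := hc2' 0
    omega

/-- Every white point sees an occurrence avoiding the white region. -/
lemma white_gray_occ {χ : Matrix (Fin m) (Fin m) ℤ} {μ : YoungDiagram}
    {f : ℕ × ℕ → ℤ} {p : ℕ × ℕ} (hp : p ∈ White χ μ f) :
    ∃ r c : Fin m → ℕ, StrictMono r ∧ StrictMono c ∧
      (∀ x y, (r x, c y) ∈ μ.cells) ∧ (∀ x y, f (r x, c y) = χ x y) ∧
      (∀ x, p.1 < r x) ∧ (∀ y, p.2 < c y) ∧ ∀ x y, (r x, c y) ∉ White χ μ f :=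
  seocc_avoid (fun _ hq => hq.2) hp.2

lemma seocc_combine_of_white {χ : Matrix (Fin m) (Fin m) ℤ} {μ : YoungDiagram}
    {f h : ℕ × ℕ → ℤ} {p : ℕ × ℕ} (hp : p ∈ White χ μ f) :
    SEOcc χ μ (combine χ μ f h) p := by
  obtain ⟨r, c, hr, hc, hcell, hval, hr', hc', hgray⟩ := white_gray_occ hp
  refine ⟨r, c, hr, hc, hcell, fun x y => ?_, hr', hc'⟩
  rw [combine_eq_of_notMem (hgray x y)]; exact hval x y

/-- Stability of the white region under changing the filling on the white region. -/
lemma white_combine (χ : Matrix (Fin m) (Fin m) ℤ) (μ : YoungDiagram)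
    (f h : ℕ × ℕ → ℤ) : White χ μ (combine χ μ f h) = White χ μ f := by
  ext p
  constructor
  · rintro ⟨hcell, hocc⟩
    refine ⟨hcell, ?_⟩
    obtain ⟨r, c, hr, hc, hcells, hval, hr', hc', hgray⟩ :=
      seocc_avoid (W := White χ μ f) (fun q hq => seocc_combine_of_white hq) hocc
    refine ⟨r, c, hr, hc, hcells, fun x y => ?_, hr', hc'⟩
    rw [← hval x y, combine_eq_of_notMem (hgray x y)]
  · rintro ⟨hcell, hocc⟩
    exact ⟨hcell, seocc_combine_of_white ⟨hcell, hocc⟩⟩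

lemma whiteYD_combine (χ : Matrix (Fin m) (Fin m) ℤ) (μ : YoungDiagram)
    (f h : ℕ × ℕ → ℤ) : whiteYD χ μ (combine χ μ f h) = whiteYD χ μ f := by
  have hW := white_combine χ μ f h
  ext p
  simp only [mem_whiteYD]
  rw [hW]

end

end BW

namespace BW

open scoped Classical

noncomputable section

variable {m : ℕ} {χ : Matrix (Fin m) (Fin m) ℤ} {μ : YoungDiagram}

lemma white_subset_cells {f : ℕ × ℕ → ℤ} : White χ μ f ⊆ ↑μ.cells :=
  fun _ hp => hp.1

/-- The white part of a sparse filling is a sparse filling of the white diagram. -/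
lemma whitePart_sparse {f : ℕ × ℕ → ℤ} (hf : IsSparseFilling μ f) :
    IsSparseFilling (whiteYD χ μ f) (whitePart χ μ f) := by
  obtain ⟨hsupp, hvals, hrow, hcol⟩ := hf
  refine ⟨?_, ?_, ?_, ?_⟩
  · intro p hp
    rw [mem_whiteYD]
    by_contra hw
    exact hp (whitePart_eq_zero hw)
  · intro p
    by_cases hw : p ∈ White χ μ f
    · rw [whitePart_eq_of_mem hw]; exact hvals p
    · rw [whitePart_eq_zero hw]; left; rfl
  · intro i j₁ h₁ j₂ h₂
    simp only [Set.mem_setOf_eq] at h₁ h₂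
    by_cases hw₁ : (i, j₁) ∈ White χ μ f
    · by_cases hw₂ : (i, j₂) ∈ White χ μ f
      · rw [whitePart_eq_of_mem hw₁] at h₁; rw [whitePart_eq_of_mem hw₂] at h₂
        exact hrow i h₁ h₂
      · exact absurd (whitePart_eq_zero hw₂) h₂
    · exact absurd (whitePart_eq_zero hw₁) h₁
  · intro j i₁ h₁ i₂ h₂
    simp only [Set.mem_setOf_eq] at h₁ h₂
    by_cases hw₁ : (i₁, j) ∈ White χ μ f
    · by_cases hw₂ : (i₂, j) ∈ White χ μ f
      · rw [whitePart_eq_of_mem hw₁] at h₁; rw [whitePart_eq_of_mem hw₂] at h₂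
        exact hcol j h₁ h₂
      · exact absurd (whitePart_eq_zero hw₂) h₂
    · exact absurd (whitePart_eq_zero hw₁) h₁

/-- Hypotheses on the replacement filling `h`. -/
structure Repl (χ : Matrix (Fin m) (Fin m) ℤ) (μ : YoungDiagram) (f h : ℕ × ℕ → ℤ) :
    Prop where
  hsupp : ∀ p, h p ≠ 0 → p ∈ White χ μ f
  hvals : ∀ p, h p = 0 ∨ h p = 1 ∨ h p = -1
  hrow : ∀ i, {j : ℕ | h (i, j) ≠ 0}.Subsingleton
  hcol : ∀ j, {i : ℕ | h (i, j) ≠ 0}.Subsingleton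
  hrs : rowsupp h = rowsupp (whitePart χ μ f)
  hcs : colsupp h = colsupp (whitePart χ μ f)

lemma repl_of_sparse {f h : ℕ × ℕ → ℤ}
    (hsf : IsSparseFilling (whiteYD χ μ f) h)
    (hrs : rowsupp h = rowsupp (whitePart χ μ f))
    (hcs : colsupp h = colsupp (whitePart χ μ f)) : Repl χ μ f h :=
  ⟨fun p hp => mem_whiteYD.mp (hsf.1 p hp), hsf.2.1, hsf.2.2.1, hsf.2.2.2, hrs, hcs⟩

lemma combine_sparse {f h : ℕ × ℕ → ℤ} (hf : IsSparseFilling μ f)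
    (hr : Repl χ μ f h) :
    IsSparseFilling μ (combine χ μ f h) ∧
      rowsupp (combine χ μ f h) = rowsupp f ∧
      colsupp (combine χ μ f h) = colsupp f := by
  obtain ⟨hsupp, hvals, hrow, hcol⟩ := hf
  have key_row : ∀ i j₁ j₂, (i, j₁) ∈ White χ μ f → h (i, j₁) ≠ 0 →
      (i, j₂) ∉ White χ μ f → f (i, j₂) ≠ 0 → False := by
    intro i j₁ j₂ hw₁ h₁ hw₂ h₂
    have : i ∈ rowsupp (whitePart χ μ f) := hr.hrs ▸ ⟨j₁, h₁⟩
    obtain ⟨j₃, h₃⟩ := this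
    have hw₃ : (i, j₃) ∈ White χ μ f := by
      by_contra hc; exact h₃ (whitePart_eq_zero hc)
    rw [whitePart_eq_of_mem hw₃] at h₃
    have : j₃ = j₂ := hrow i h₃ h₂
    exact hw₂ (this ▸ hw₃)
  have key_col : ∀ j i₁ i₂, (i₁, j) ∈ White χ μ f → h (i₁, j) ≠ 0 →
      (i₂, j) ∉ White χ μ f → f (i₂, j) ≠ 0 → False := by
    intro j i₁ i₂ hw₁ h₁ hw₂ h₂
    have : j ∈ colsupp (whitePart χ μ f) := hr.hcs ▸ ⟨i₁, h₁⟩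
    obtain ⟨i₃, h₃⟩ := this
    have hw₃ : (i₃, j) ∈ White χ μ f := by
      by_contra hc; exact h₃ (whitePart_eq_zero hc)
    rw [whitePart_eq_of_mem hw₃] at h₃
    have : i₃ = i₂ := hcol j h₃ h₂
    exact hw₂ (this ▸ hw₃)
  refine ⟨⟨?_, ?_, ?_, ?_⟩, ?_, ?_⟩
  · intro p hp
    by_cases hw : p ∈ White χ μ f
    · exact hw.1
    · rw [combine_eq_of_notMem hw] at hp; exact hsupp p hp
  · intro p
    by_cases hw : p ∈ White χ μ f
    · rw [combine_eq_of_mem hw]; exact hr.hvals p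
    · rw [combine_eq_of_notMem hw]; exact hvals p
  · intro i j₁ h₁ j₂ h₂
    simp only [Set.mem_setOf_eq] at h₁ h₂
    by_cases hw₁ : (i, j₁) ∈ White χ μ f <;> by_cases hw₂ : (i, j₂) ∈ White χ μ f
    · rw [combine_eq_of_mem hw₁] at h₁; rw [combine_eq_of_mem hw₂] at h₂
      exact hr.hrow i h₁ h₂
    · rw [combine_eq_of_mem hw₁] at h₁; rw [combine_eq_of_notMem hw₂] at h₂
      exact absurd (key_row i j₁ j₂ hw₁ h₁ hw₂ h₂) (by simp)
    · rw [combine_eq_of_notMem hw₁] at h₁; rw [combine_eq_of_mem hw₂] at h₂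
      exact absurd (key_row i j₂ j₁ hw₂ h₂ hw₁ h₁) (by simp)
    · rw [combine_eq_of_notMem hw₁] at h₁; rw [combine_eq_of_notMem hw₂] at h₂
      exact hrow i h₁ h₂
  · intro j i₁ h₁ i₂ h₂
    simp only [Set.mem_setOf_eq] at h₁ h₂
    by_cases hw₁ : (i₁, j) ∈ White χ μ f <;> by_cases hw₂ : (i₂, j) ∈ White χ μ f
    · rw [combine_eq_of_mem hw₁] at h₁; rw [combine_eq_of_mem hw₂] at h₂
      exact hr.hcol j h₁ h₂
    · rw [combine_eq_of_mem hw₁] at h₁; rw [combine_eq_of_notMem hw₂] at h₂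
      exact absurd (key_col j i₁ i₂ hw₁ h₁ hw₂ h₂) (by simp)
    · rw [combine_eq_of_notMem hw₁] at h₁; rw [combine_eq_of_mem hw₂] at h₂
      exact absurd (key_col j i₂ i₁ hw₂ h₂ hw₁ h₁) (by simp)
    · rw [combine_eq_of_notMem hw₁] at h₁; rw [combine_eq_of_notMem hw₂] at h₂
      exact hcol j h₁ h₂
  · ext i
    simp only [rowsupp, Set.mem_setOf_eq]
    constructor
    · rintro ⟨j, hj⟩
      by_cases hw : (i, j) ∈ White χ μ f
      · rw [combine_eq_of_mem hw] at hj
        have : i ∈ rowsupp (whitePart χ μ f) := hr.hrs ▸ ⟨j, hj⟩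
        obtain ⟨j', hj'⟩ := this
        by_cases hw' : (i, j') ∈ White χ μ f
        · rw [whitePart_eq_of_mem hw'] at hj'; exact ⟨j', hj'⟩
        · exact absurd (whitePart_eq_zero hw') hj'
      · rw [combine_eq_of_notMem hw] at hj; exact ⟨j, hj⟩
    · rintro ⟨j, hj⟩
      by_cases hw : (i, j) ∈ White χ μ f
      · have : i ∈ rowsupp h := by
          rw [hr.hrs]; exact ⟨j, by rw [whitePart_eq_of_mem hw]; exact hj⟩
        obtain ⟨j', hj'⟩ := this
        exact ⟨j', by rw [combine_eq_of_mem (hr.hsupp _ hj')]; exact hj'⟩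
      · exact ⟨j, by rw [combine_eq_of_notMem hw]; exact hj⟩
  · ext j
    simp only [colsupp, Set.mem_setOf_eq]
    constructor
    · rintro ⟨i, hi⟩
      by_cases hw : (i, j) ∈ White χ μ f
      · rw [combine_eq_of_mem hw] at hi
        have : j ∈ colsupp (whitePart χ μ f) := hr.hcs ▸ ⟨i, hi⟩
        obtain ⟨i', hi'⟩ := this
        by_cases hw' : (i', j) ∈ White χ μ f
        · rw [whitePart_eq_of_mem hw'] at hi'; exact ⟨i', hi'⟩
        · exact absurd (whitePart_eq_zero hw') hi'
      · rw [combine_eq_of_notMem hw] at hi; exact ⟨i, hi⟩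
    · rintro ⟨i, hi⟩
      by_cases hw : (i, j) ∈ White χ μ f
      · have : j ∈ colsupp h := by
          rw [hr.hcs]; exact ⟨i, by rw [whitePart_eq_of_mem hw]; exact hi⟩
        obtain ⟨i', hi'⟩ := this
        exact ⟨i', by rw [combine_eq_of_mem (hr.hsupp _ hi')]; exact hi'⟩
      · exact ⟨i, by rw [combine_eq_of_notMem hw]; exact hi⟩

lemma whitePart_combine {f h : ℕ × ℕ → ℤ} (hr : Repl χ μ f h) :
    whitePart χ μ (combine χ μ f h) = h := by
  funext p
  by_cases hw : p ∈ White χ μ f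
  · rw [whitePart_eq_of_mem (by rw [white_combine]; exact hw), combine_eq_of_mem hw]
  · rw [whitePart_eq_zero (by rw [white_combine]; exact hw)]
    by_contra hc
    exact hw (hr.hsupp p (fun h0 => hc h0.symm))

end

end BW

namespace BW

open scoped Classical

noncomputable section

lemma blockDiag2_ll {a b : ℕ} (A : Matrix (Fin a) (Fin a) ℤ)
    (B : Matrix (Fin b) (Fin b) ℤ) (i j : Fin a) :
    blockDiag2 A B (Fin.castAdd b i) (Fin.castAdd b j) = A i j := by
  simp [blockDiag2, Matrix.reindex_apply, Matrix.submatrix_apply,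
    finSumFinEquiv_symm_apply_castAdd]

lemma blockDiag2_rr {a b : ℕ} (A : Matrix (Fin a) (Fin a) ℤ)
    (B : Matrix (Fin b) (Fin b) ℤ) (i j : Fin b) :
    blockDiag2 A B (Fin.natAdd a i) (Fin.natAdd a j) = B i j := by
  simp [blockDiag2, Matrix.reindex_apply, Matrix.submatrix_apply,
    finSumFinEquiv_symm_apply_natAdd]

lemma blockDiag2_lr {a b : ℕ} (A : Matrix (Fin a) (Fin a) ℤ)
    (B : Matrix (Fin b) (Fin b) ℤ) (i : Fin a) (j : Fin b) :
    blockDiag2 A B (Fin.castAdd b i) (Fin.natAdd a j) = 0 := by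
  rw [blockDiag2, Matrix.reindex_apply, Matrix.submatrix_apply,
    finSumFinEquiv_symm_apply_castAdd, finSumFinEquiv_symm_apply_natAdd,
    Matrix.fromBlocks_apply₁₂]
  rfl

lemma blockDiag2_rl {a b : ℕ} (A : Matrix (Fin a) (Fin a) ℤ)
    (B : Matrix (Fin b) (Fin b) ℤ) (i : Fin b) (j : Fin a) :
    blockDiag2 A B (Fin.natAdd a i) (Fin.castAdd b j) = 0 := by
  rw [blockDiag2, Matrix.reindex_apply, Matrix.submatrix_apply,
    finSumFinEquiv_symm_apply_castAdd, finSumFinEquiv_symm_apply_natAdd,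
    Matrix.fromBlocks_apply₂₁]
  rfl

lemma blockDiag2_apply {a b : ℕ} (A : Matrix (Fin a) (Fin a) ℤ)
    (B : Matrix (Fin b) (Fin b) ℤ) (i j : Fin (a + b)) :
    blockDiag2 A B i j =
      if hi : (i : ℕ) < a then
        (if hj : (j : ℕ) < a then A ⟨i, hi⟩ ⟨j, hj⟩ else 0)
      else if hj : (j : ℕ) < a then 0
        else B ⟨(i : ℕ) - a, by omega⟩ ⟨(j : ℕ) - a, by omega⟩ := by
  have hca : ∀ i' : Fin a, ((Fin.castAdd b i' : Fin (a + b)) : ℕ) < a := by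
    intro i'; simpa using i'.isLt
  have hna : ∀ i' : Fin b, ¬ ((Fin.natAdd a i' : Fin (a + b)) : ℕ) < a := by
    intro i'; simp only [Fin.coe_natAdd]; omega
  refine Fin.addCases (fun i' => ?_) (fun i' => ?_) i <;>
    refine Fin.addCases (fun j' => ?_) (fun j' => ?_) j
  · rw [blockDiag2_ll, dif_pos (hca i'), dif_pos (hca j')]
    congr 1 <;> exact Fin.ext rfl
  · rw [blockDiag2_lr, dif_pos (hca i'), dif_neg (hna j')]
  · rw [blockDiag2_rl, dif_neg (hna i'), dif_pos (hca j')]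
  · rw [blockDiag2_rr, dif_neg (hna i'), dif_neg (hna j')]
    congr 1 <;> exact Fin.ext (by simp only [Fin.coe_natAdd]; omega)

variable {m : ℕ} {χ : Matrix (Fin m) (Fin m) ℤ} {μ : YoungDiagram}

lemma castAdd_strictMono {k n : ℕ} : StrictMono (fun i : Fin k => Fin.castAdd n i) :=
  fun i j hij => by
    rw [Fin.lt_def] at hij ⊢
    exact hij

lemma natAdd_strictMono {k n : ℕ} : StrictMono (fun i : Fin n => Fin.natAdd k i) :=
  fun i j hij => by
    rw [Fin.lt_def] at hij ⊢
    simp only [Fin.coe_natAdd]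
    omega

/-- Key containment equivalence: a sparse filling of `μ` contains `[[σ,0],[0,χ]]`
iff its white part contains `σ` inside the white diagram. -/
lemma contains_blockDiag2_iff {k : ℕ} (σ : Matrix (Fin k) (Fin k) ℤ) (hk : 0 < k)
    (hσ : IsSignedPermMatrix σ) {f : ℕ × ℕ → ℤ} (hf : IsSparseFilling μ f) :
    YDContains μ f (blockDiag2 σ χ) ↔
      YDContains (whiteYD χ μ f) (whitePart χ μ f) σ := by
  constructor
  · rintro ⟨r, c, hr, hc, hcell, hval⟩
    have hwhite : ∀ a b : Fin k, (r (Fin.castAdd m a), c (Fin.castAdd m b)) ∈ White χ μ f := by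
      intro a b
      refine ⟨hcell _ _, fun x => r (Fin.natAdd k x), fun y => c (Fin.natAdd k y),
        hr.comp natAdd_strictMono, hc.comp natAdd_strictMono,
        fun x y => hcell _ _, fun x y => ?_, fun x => ?_, fun y => ?_⟩
      · rw [hval, blockDiag2_rr]
      · exact hr (by simp [Fin.lt_def]; omega)
      · exact hc (by simp [Fin.lt_def]; omega)
    refine ⟨fun a => r (Fin.castAdd m a), fun b => c (Fin.castAdd m b),
      hr.comp castAdd_strictMono, hc.comp castAdd_strictMono,
      fun a b => mem_whiteYD.mpr (hwhite a b), fun a b => ?_⟩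
    rw [whitePart_eq_of_mem (hwhite a b), hval, blockDiag2_ll]
  · rintro ⟨r₁, c₁, hr₁, hc₁, hcell₁, hval₁⟩
    have hwhite : ∀ a b : Fin k, (r₁ a, c₁ b) ∈ White χ μ f :=
      fun a b => mem_whiteYD.mp (hcell₁ a b)
    have hfval : ∀ a b : Fin k, f (r₁ a, c₁ b) = σ a b := fun a b => by
      rw [← whitePart_eq_of_mem (hwhite a b)]; exact hval₁ a b
    set L : Fin k := ⟨k - 1, by omega⟩ with hL
    have hle : ∀ a : Fin k, a ≤ L := fun a => by
      simp only [Fin.le_def, hL]; omega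
    obtain ⟨r₂, c₂, hr₂, hc₂, hcell₂, hval₂, hseR, hseC⟩ := (hwhite L L).2
    have hcrossR : ∀ (a : Fin k) (x : Fin m), r₁ a < r₂ x :=
      fun a x => lt_of_le_of_lt (hr₁.monotone (hle a)) (hseR x)
    have hcrossC : ∀ (b : Fin k) (y : Fin m), c₁ b < c₂ y :=
      fun b y => lt_of_le_of_lt (hc₁.monotone (hle b)) (hseC y)
    refine ⟨fun i => if h : (i : ℕ) < k then r₁ ⟨i, h⟩ else r₂ ⟨(i : ℕ) - k, by omega⟩,
      fun j => if h : (j : ℕ) < k then c₁ ⟨j, h⟩ else c₂ ⟨(j : ℕ) - k, by omega⟩,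
      ?_, ?_, ?_, ?_⟩
    · intro i j hij
      rw [Fin.lt_def] at hij
      by_cases hi : (i : ℕ) < k <;> by_cases hj : (j : ℕ) < k
      · simp only [dif_pos hi, dif_pos hj]; exact hr₁ (show (⟨(i:ℕ), hi⟩ : Fin k) < ⟨(j:ℕ), hj⟩ by rw [Fin.mk_lt_mk]; omega)
      · simp only [dif_pos hi, dif_neg hj]; exact hcrossR _ _
      · omega
      · simp only [dif_neg hi, dif_neg hj]; exact hr₂ (show (⟨(i:ℕ)-k, _⟩ : Fin m) < ⟨(j:ℕ)-k, _⟩ by rw [Fin.mk_lt_mk]; omega)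
    · intro i j hij
      rw [Fin.lt_def] at hij
      by_cases hi : (i : ℕ) < k <;> by_cases hj : (j : ℕ) < k
      · simp only [dif_pos hi, dif_pos hj]; exact hc₁ (show (⟨(i:ℕ), hi⟩ : Fin k) < ⟨(j:ℕ), hj⟩ by rw [Fin.mk_lt_mk]; omega)
      · simp only [dif_pos hi, dif_neg hj]; exact hcrossC _ _
      · omega
      · simp only [dif_neg hi, dif_neg hj]; exact hc₂ (show (⟨(i:ℕ)-k, _⟩ : Fin m) < ⟨(j:ℕ)-k, _⟩ by rw [Fin.mk_lt_mk]; omega)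
    · intro i j
      by_cases hi : (i : ℕ) < k <;> by_cases hj : (j : ℕ) < k
      · simp only [dif_pos hi, dif_pos hj]; exact (hwhite _ _).1
      · simp only [dif_pos hi, dif_neg hj]
        rw [YoungDiagram.mem_cells]
        refine μ.up_left_mem (le_of_lt (hcrossR ⟨i, hi⟩ ⟨(j:ℕ)-k, by omega⟩)) le_rfl ?_
        rw [← YoungDiagram.mem_cells]
        exact hcell₂ ⟨(j:ℕ)-k, by omega⟩ ⟨(j:ℕ)-k, by omega⟩
      · simp only [dif_neg hi, dif_pos hj]
        rw [YoungDiagram.mem_cells]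
        refine μ.up_left_mem le_rfl (le_of_lt (hcrossC ⟨j, hj⟩ ⟨(i:ℕ)-k, by omega⟩)) ?_
        rw [← YoungDiagram.mem_cells]
        exact hcell₂ ⟨(i:ℕ)-k, by omega⟩ ⟨(i:ℕ)-k, by omega⟩
      · simp only [dif_neg hi, dif_neg hj]; exact hcell₂ _ _
    · intro i j
      rw [blockDiag2_apply]
      by_cases hi : (i : ℕ) < k <;> by_cases hj : (j : ℕ) < k
      · simp only [dif_pos hi, dif_pos hj]; exact hfval _ _
      · simp only [dif_pos hi, dif_neg hj]
        obtain ⟨b₀, hb₀, -⟩ := hσ.2.1 ⟨i, hi⟩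
        have h1 : f (r₁ ⟨i, hi⟩, c₁ b₀) ≠ 0 := by rw [hfval]; exact hb₀
        by_contra hne
        have := hf.2.2.1 (r₁ ⟨i, hi⟩) hne h1
        have := hcrossC b₀ ⟨(j:ℕ)-k, by omega⟩
        omega
      · simp only [dif_neg hi, dif_pos hj]
        obtain ⟨a₀, ha₀, -⟩ := hσ.2.2 ⟨j, hj⟩
        have h1 : f (r₁ a₀, c₁ ⟨j, hj⟩) ≠ 0 := by rw [hfval]; exact ha₀
        by_contra hne
        have := hf.2.2.2 (c₁ ⟨j, hj⟩) hne h1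
        have := hcrossR a₀ ⟨(i:ℕ)-k, by omega⟩
        omega
      · simp only [dif_neg hi, dif_neg hj]; exact hval₂ _ _

end

end BW

namespace BW

open scoped Classical

noncomputable section

def SFSet (ν : YoungDiagram) {k : ℕ} (π : Matrix (Fin k) (Fin k) ℤ) (R C : Set ℕ) :
    Set (ℕ × ℕ → ℤ) :=
  {h | IsSparseFilling ν h ∧ ¬ YDContains ν h π ∧ rowsupp h = R ∧ colsupp h = C}

def TSet (ν : YoungDiagram) {k : ℕ} (π : Matrix (Fin k) (Fin k) ℤ) :
    Set (ℕ × ℕ → ℤ) :=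
  {f | IsSignedTransversal ν f ∧ ¬ YDContains ν f π}

/-- Monotone enumeration of a finite set of naturals. -/
def rEnum (Rf : Finset ℕ) (x : Fin Rf.card) : ℕ := (Rf.orderIsoOfFin rfl x : ℕ)

def rIdx (Rf : Finset ℕ) (i : ℕ) (h : i ∈ Rf) : Fin Rf.card :=
  (Rf.orderIsoOfFin rfl).symm ⟨i, h⟩

lemma rEnum_mem (Rf : Finset ℕ) (x : Fin Rf.card) : rEnum Rf x ∈ Rf :=
  (Rf.orderIsoOfFin rfl x).2

lemma rEnum_strictMono (Rf : Finset ℕ) : StrictMono (rEnum Rf) := fun x y hxy =>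
  Subtype.coe_lt_coe.mpr ((Rf.orderIsoOfFin rfl).strictMono hxy)

lemma rEnum_rIdx (Rf : Finset ℕ) {i : ℕ} (h : i ∈ Rf) : rEnum Rf (rIdx Rf i h) = i := by
  simp only [rEnum, rIdx, OrderIso.apply_symm_apply]

lemma rIdx_rEnum (Rf : Finset ℕ) (x : Fin Rf.card) (h : rEnum Rf x ∈ Rf) :
    rIdx Rf (rEnum Rf x) h = x := by
  have : (⟨rEnum Rf x, h⟩ : {y // y ∈ Rf}) = Rf.orderIsoOfFin rfl x := Subtype.ext rfl
  simp only [rIdx, this, OrderIso.symm_apply_apply]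

lemma rIdx_lt (Rf : Finset ℕ) {i j : ℕ} (hij : i < j) (hi : i ∈ Rf) (hj : j ∈ Rf) :
    rIdx Rf i hi < rIdx Rf j hj :=
  (Rf.orderIsoOfFin rfl).symm.strictMono (Subtype.mk_lt_mk.mpr hij)

/-- The Young diagram obtained from `ν` by restricting to rows in `Rf` and
columns in `Cf` and renumbering. -/
def restrictYD (ν : YoungDiagram) (Rf Cf : Finset ℕ) : YoungDiagram where
  cells := (Finset.range Rf.card ×ˢ Finset.range Cf.card).filter
    (fun p => ∃ (hx : p.1 < Rf.card) (hy : p.2 < Cf.card),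
      (rEnum Rf ⟨p.1, hx⟩, rEnum Cf ⟨p.2, hy⟩) ∈ ν.cells)
  isLowerSet := by
    intro p q hle hp
    simp only [Finset.coe_filter, Set.mem_setOf_eq, Finset.mem_product,
      Finset.mem_range] at hp ⊢
    obtain ⟨⟨h1, h2⟩, hx, hy, hcell⟩ := hp
    have hq1 : q.1 < Rf.card := lt_of_le_of_lt hle.1 h1
    have hq2 : q.2 < Cf.card := lt_of_le_of_lt hle.2 h2
    refine ⟨⟨hq1, hq2⟩, hq1, hq2, ?_⟩
    rw [YoungDiagram.mem_cells]
    exact ν.up_left_mem ((rEnum_strictMono Rf).monotone (Fin.mk_le_mk.mpr hle.1))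
      ((rEnum_strictMono Cf).monotone (Fin.mk_le_mk.mpr hle.2))
      ((YoungDiagram.mem_cells _).mp hcell)

lemma mem_restrictYD {ν : YoungDiagram} {Rf Cf : Finset ℕ} {p : ℕ × ℕ} :
    p ∈ (restrictYD ν Rf Cf).cells ↔
      p.1 < Rf.card ∧ p.2 < Cf.card ∧ ∀ (hx : p.1 < Rf.card) (hy : p.2 < Cf.card),
        (rEnum Rf ⟨p.1, hx⟩, rEnum Cf ⟨p.2, hy⟩) ∈ ν.cells := by
  simp only [restrictYD, Finset.mem_filter, Finset.mem_product, Finset.mem_range]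
  constructor
  · rintro ⟨⟨h1, h2⟩, hx, hy, hcell⟩
    exact ⟨h1, h2, fun _ _ => hcell⟩
  · rintro ⟨h1, h2, hall⟩
    exact ⟨⟨h1, h2⟩, h1, h2, hall h1 h2⟩

def Dmap (Rf Cf : Finset ℕ) (h : ℕ × ℕ → ℤ) : ℕ × ℕ → ℤ := fun p =>
  if hp : p.1 < Rf.card ∧ p.2 < Cf.card then
    h (rEnum Rf ⟨p.1, hp.1⟩, rEnum Cf ⟨p.2, hp.2⟩) else 0

def Umap (Rf Cf : Finset ℕ) (T : ℕ × ℕ → ℤ) : ℕ × ℕ → ℤ := fun p =>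
  if hp : p.1 ∈ Rf ∧ p.2 ∈ Cf then
    T ((rIdx Rf p.1 hp.1 : ℕ), (rIdx Cf p.2 hp.2 : ℕ)) else 0

lemma Dmap_mem_TSet {k : ℕ} {π : Matrix (Fin k) (Fin k) ℤ} {ν : YoungDiagram}
    {Rf Cf : Finset ℕ} {h : ℕ × ℕ → ℤ} (hh : h ∈ SFSet ν π ↑Rf ↑Cf) :
    Dmap Rf Cf h ∈ TSet (restrictYD ν Rf Cf) π := by
  obtain ⟨⟨hsupp, hvals, hrow, hcol⟩, havoid, hrs, hcs⟩ := hh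
  have hnz : ∀ p, Dmap Rf Cf h p ≠ 0 → ∃ (h1 : p.1 < Rf.card) (h2 : p.2 < Cf.card),
      h (rEnum Rf ⟨p.1, h1⟩, rEnum Cf ⟨p.2, h2⟩) ≠ 0 := by
    intro p hp
    by_cases hc : p.1 < Rf.card ∧ p.2 < Cf.card
    · rw [Dmap, dif_pos hc] at hp; exact ⟨hc.1, hc.2, hp⟩
    · rw [Dmap, dif_neg hc] at hp; exact absurd rfl hp
  refine ⟨⟨⟨?_, ?_, ?_, ?_⟩, ?_, ?_⟩, ?_⟩
  · -- support
    intro p hp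
    obtain ⟨h1, h2, hne⟩ := hnz p hp
    exact mem_restrictYD.mpr ⟨h1, h2, fun _ _ => hsupp _ hne⟩
  · -- values
    intro p
    by_cases hc : p.1 < Cf.card ∧ p.2 < Cf.card
    all_goals {
      rw [Dmap]
      by_cases hc' : p.1 < Rf.card ∧ p.2 < Cf.card
      · rw [dif_pos hc']; exact hvals _
      · rw [dif_neg hc']; left; rfl }
  · -- row subsingleton
    intro x j₁ hj₁ j₂ hj₂
    simp only [Set.mem_setOf_eq] at hj₁ hj₂
    obtain ⟨ha1, ha2, hne₁⟩ := hnz _ hj₁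
    obtain ⟨hb1, hb2, hne₂⟩ := hnz _ hj₂
    have := hrow (rEnum Rf ⟨x, ha1⟩) hne₁ hne₂
    have := (rEnum_strictMono Cf).injective this
    exact congrArg Fin.val this
  · -- col subsingleton
    intro y i₁ hi₁ i₂ hi₂
    simp only [Set.mem_setOf_eq] at hi₁ hi₂
    obtain ⟨ha1, ha2, hne₁⟩ := hnz _ hi₁
    obtain ⟨hb1, hb2, hne₂⟩ := hnz _ hi₂
    have := hcol (rEnum Cf ⟨y, ha2⟩) hne₁ hne₂
    have := (rEnum_strictMono Rf).injective this
    exact congrArg Fin.val this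
  · -- every nonempty row hits
    rintro x ⟨y, hxy⟩
    obtain ⟨hx, hy, -⟩ := mem_restrictYD.mp hxy
    have hiRf : rEnum Rf ⟨x, hx⟩ ∈ Rf := rEnum_mem Rf _
    have : rEnum Rf ⟨x, hx⟩ ∈ rowsupp h := by rw [hrs]; exact_mod_cast hiRf
    obtain ⟨j, hj⟩ := this
    have hjC : j ∈ Cf := by
      have : j ∈ colsupp h := ⟨_, hj⟩
      rw [hcs] at this; exact_mod_cast this
    refine ⟨(rIdx Cf j hjC : ℕ), ?_⟩
    rw [Dmap, dif_pos ⟨hx, (rIdx Cf j hjC).isLt⟩]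
    simpa only [Fin.eta, rEnum_rIdx] using hj
  · -- every nonempty column hits
    rintro y ⟨x, hxy⟩
    obtain ⟨hx, hy, -⟩ := mem_restrictYD.mp hxy
    have hjCf : rEnum Cf ⟨y, hy⟩ ∈ Cf := rEnum_mem Cf _
    have : rEnum Cf ⟨y, hy⟩ ∈ colsupp h := by rw [hcs]; exact_mod_cast hjCf
    obtain ⟨i, hi⟩ := this
    have hiR : i ∈ Rf := by
      have : i ∈ rowsupp h := ⟨_, hi⟩
      rw [hrs] at this; exact_mod_cast this
    refine ⟨(rIdx Rf i hiR : ℕ), ?_⟩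
    rw [Dmap, dif_pos ⟨(rIdx Rf i hiR).isLt, hy⟩]
    simpa only [Fin.eta, rEnum_rIdx] using hi
  · -- avoidance transfer
    rintro ⟨u, v, hu, hv, hcell, hval⟩
    refine havoid ⟨?_, ?_, ?_, ?_, ?_, ?_⟩
    · exact fun a => rEnum Rf ⟨u a, (mem_restrictYD.mp (hcell a a)).1⟩
    · exact fun b => rEnum Cf ⟨v b, (mem_restrictYD.mp (hcell b b)).2.1⟩
    · intro a b hab
      exact rEnum_strictMono Rf (by rw [Fin.mk_lt_mk]; exact hu hab)
    · intro a b hab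
      exact rEnum_strictMono Cf (by rw [Fin.mk_lt_mk]; exact hv hab)
    · intro a b
      exact (mem_restrictYD.mp (hcell a b)).2.2 _ _
    · intro a b
      have := hval a b
      rw [Dmap, dif_pos ⟨(mem_restrictYD.mp (hcell a a)).1,
        (mem_restrictYD.mp (hcell b b)).2.1⟩] at this
      exact this

lemma Umap_Dmap {k : ℕ} {π : Matrix (Fin k) (Fin k) ℤ} {ν : YoungDiagram}
    {Rf Cf : Finset ℕ} {h : ℕ × ℕ → ℤ} (hh : h ∈ SFSet ν π ↑Rf ↑Cf) :
    Umap Rf Cf (Dmap Rf Cf h) = h := by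
  obtain ⟨⟨hsupp, hvals, hrow, hcol⟩, havoid, hrs, hcs⟩ := hh
  funext p
  obtain ⟨i, j⟩ := p
  by_cases hp : i ∈ Rf ∧ j ∈ Cf
  · rw [Umap, dif_pos hp, Dmap, dif_pos ⟨(rIdx Rf i hp.1).isLt, (rIdx Cf j hp.2).isLt⟩]
    simp only [Fin.eta, rEnum_rIdx]
  · rw [Umap, dif_neg hp]
    by_contra hne
    refine hp ⟨?_, ?_⟩
    · have : i ∈ rowsupp h := ⟨j, fun hc => hne hc.symm⟩
      rw [hrs] at this; exact_mod_cast this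
    · have : j ∈ colsupp h := ⟨i, fun hc => hne hc.symm⟩
      rw [hcs] at this; exact_mod_cast this

lemma Umap_mem_SFSet {k : ℕ} {π : Matrix (Fin k) (Fin k) ℤ}
    (hπ : IsSignedPermMatrix π) {ν : YoungDiagram} {Rf Cf : Finset ℕ}
    (hgr : ∀ i ∈ Rf, ∃ j ∈ Cf, (i, j) ∈ ν.cells)
    (hgc : ∀ j ∈ Cf, ∃ i ∈ Rf, (i, j) ∈ ν.cells)
    {T : ℕ × ℕ → ℤ} (hT : T ∈ TSet (restrictYD ν Rf Cf) π) :
    Umap Rf Cf T ∈ SFSet ν π ↑Rf ↑Cf ∧ Dmap Rf Cf (Umap Rf Cf T) = T := by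
  obtain ⟨⟨⟨hsupp, hvals, hrow, hcol⟩, htr, htc⟩, havoid⟩ := hT
  have hnz : ∀ p, Umap Rf Cf T p ≠ 0 → ∃ (h1 : p.1 ∈ Rf) (h2 : p.2 ∈ Cf),
      T ((rIdx Rf p.1 h1 : ℕ), (rIdx Cf p.2 h2 : ℕ)) ≠ 0 := by
    intro p hp
    by_cases hc : p.1 ∈ Rf ∧ p.2 ∈ Cf
    · rw [Umap, dif_pos hc] at hp; exact ⟨hc.1, hc.2, hp⟩
    · rw [Umap, dif_neg hc] at hp; exact absurd rfl hp
  constructor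
  · refine ⟨⟨?_, ?_, ?_, ?_⟩, ?_, ?_, ?_⟩
    · -- support
      intro p hp
      obtain ⟨h1, h2, hne⟩ := hnz p hp
      have := mem_restrictYD.mp (hsupp _ hne)
      have hc := this.2.2 (rIdx Rf p.1 h1).isLt (rIdx Cf p.2 h2).isLt
      simp only [Fin.eta, rEnum_rIdx] at hc
      rwa [Prod.mk.eta] at hc
    · -- values
      intro p
      rw [Umap]
      by_cases hc : p.1 ∈ Rf ∧ p.2 ∈ Cf
      · rw [dif_pos hc]; exact hvals _
      · rw [dif_neg hc]; left; rfl
    · -- row subsingleton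
      intro i j₁ hj₁ j₂ hj₂
      simp only [Set.mem_setOf_eq] at hj₁ hj₂
      obtain ⟨ha1, ha2, hne₁⟩ := hnz _ hj₁
      obtain ⟨hb1, hb2, hne₂⟩ := hnz _ hj₂
      have := hrow (rIdx Rf i ha1 : ℕ) hne₁ hne₂
      have := Fin.val_injective this
      have := congrArg (rEnum Cf) this
      rwa [rEnum_rIdx, rEnum_rIdx] at this
    · -- col subsingleton
      intro j i₁ hi₁ i₂ hi₂
      simp only [Set.mem_setOf_eq] at hi₁ hi₂
      obtain ⟨ha1, ha2, hne₁⟩ := hnz _ hi₁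
      obtain ⟨hb1, hb2, hne₂⟩ := hnz _ hi₂
      have := hcol (rIdx Cf j ha2 : ℕ) hne₁ hne₂
      have := Fin.val_injective this
      have := congrArg (rEnum Rf) this
      rwa [rEnum_rIdx, rEnum_rIdx] at this
    · -- avoidance
      rintro ⟨r, c, hr, hc, hcell, hval⟩
      have hRa : ∀ a, r a ∈ Rf := by
        intro a
        obtain ⟨b₀, hb₀, -⟩ := hπ.2.1 a
        have : Umap Rf Cf T (r a, c b₀) ≠ 0 := by rw [hval]; exact hb₀
        obtain ⟨h1, -, -⟩ := hnz _ this
        exact h1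
      have hCb : ∀ b, c b ∈ Cf := by
        intro b
        obtain ⟨a₀, ha₀, -⟩ := hπ.2.2 b
        have : Umap Rf Cf T (r a₀, c b) ≠ 0 := by rw [hval]; exact ha₀
        obtain ⟨-, h2, -⟩ := hnz _ this
        exact h2
      refine havoid ⟨fun a => (rIdx Rf (r a) (hRa a) : ℕ),
        fun b => (rIdx Cf (c b) (hCb b) : ℕ), ?_, ?_, ?_, ?_⟩
      · intro a b hab
        exact rIdx_lt Rf (hr hab) _ _
      · intro a b hab
        exact rIdx_lt Cf (hc hab) _ _
      · intro a b
        refine mem_restrictYD.mpr ⟨(rIdx Rf (r a) (hRa a)).isLt,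
          (rIdx Cf (c b) (hCb b)).isLt, ?_⟩
        intro hx hy
        simp only [Fin.eta, rEnum_rIdx]
        exact hcell a b
      · intro a b
        have := hval a b
        rw [Umap, dif_pos ⟨hRa a, hCb b⟩] at this
        exact this
    · -- row support
      ext i
      simp only [rowsupp, Set.mem_setOf_eq, Finset.mem_coe]
      constructor
      · rintro ⟨j, hj⟩
        obtain ⟨h1, -, -⟩ := hnz _ hj
        exact h1
      · intro hi
        obtain ⟨j, hjC, hcell⟩ := hgr i hi
        have hmem : (((rIdx Rf i hi : ℕ)), ((rIdx Cf j hjC : ℕ))) ∈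
            (restrictYD ν Rf Cf).cells := by
          refine mem_restrictYD.mpr ⟨(rIdx Rf i hi).isLt, (rIdx Cf j hjC).isLt, ?_⟩
          intro hx hy
          simp only [Fin.eta, rEnum_rIdx]
          exact hcell
        obtain ⟨y, hy⟩ := htr (rIdx Rf i hi : ℕ) ⟨_, hmem⟩
        have hymem := hsupp _ hy
        have hylt : y < Cf.card := (mem_restrictYD.mp hymem).2.1
        refine ⟨rEnum Cf ⟨y, hylt⟩, ?_⟩
        rw [Umap, dif_pos ⟨hi, rEnum_mem Cf ⟨y, hylt⟩⟩]
        rw [rIdx_rEnum Cf ⟨y, hylt⟩ (rEnum_mem Cf _)]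
        exact hy
    · -- col support
      ext j
      simp only [colsupp, Set.mem_setOf_eq, Finset.mem_coe]
      constructor
      · rintro ⟨i, hi⟩
        obtain ⟨-, h2, -⟩ := hnz _ hi
        exact h2
      · intro hj
        obtain ⟨i, hiR, hcell⟩ := hgc j hj
        have hmem : (((rIdx Rf i hiR : ℕ)), ((rIdx Cf j hj : ℕ))) ∈
            (restrictYD ν Rf Cf).cells := by
          refine mem_restrictYD.mpr ⟨(rIdx Rf i hiR).isLt, (rIdx Cf j hj).isLt, ?_⟩
          intro hx hy
          simp only [Fin.eta, rEnum_rIdx]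
          exact hcell
        obtain ⟨x, hx⟩ := htc (rIdx Cf j hj : ℕ) ⟨_, hmem⟩
        have hxmem := hsupp _ hx
        have hxlt : x < Rf.card := (mem_restrictYD.mp hxmem).1
        refine ⟨rEnum Rf ⟨x, hxlt⟩, ?_⟩
        rw [Umap, dif_pos ⟨rEnum_mem Rf ⟨x, hxlt⟩, hj⟩]
        rw [rIdx_rEnum Rf ⟨x, hxlt⟩ (rEnum_mem Rf _)]
        exact hx
  · -- D (U T) = T
    funext p
    obtain ⟨x, y⟩ := p
    by_cases hp : x < Rf.card ∧ y < Cf.card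
    · rw [Dmap, dif_pos hp, Umap,
        dif_pos ⟨rEnum_mem Rf ⟨x, hp.1⟩, rEnum_mem Cf ⟨y, hp.2⟩⟩]
      rw [rIdx_rEnum Rf ⟨x, hp.1⟩ (rEnum_mem Rf _), rIdx_rEnum Cf ⟨y, hp.2⟩ (rEnum_mem Cf _)]
    · rw [Dmap, dif_neg hp]
      by_contra hne
      have : (x, y) ∈ (restrictYD ν Rf Cf).cells := hsupp _ fun hc => hne hc.symm
      obtain ⟨h1, h2, -⟩ := mem_restrictYD.mp this
      exact hp ⟨h1, h2⟩

end

end BW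

namespace BW

open scoped Classical

noncomputable section

lemma sparse_finite (ν : YoungDiagram) : {h : ℕ × ℕ → ℤ | IsSparseFilling ν h}.Finite := by
  have hP : (Set.univ.pi (fun _ : ↥ν.cells => ({0, 1, -1} : Set ℤ))).Finite :=
    Set.Finite.pi fun _ => (Set.finite_singleton (-1 : ℤ)).insert 1 |>.insert 0
  have himg : (fun (h : ℕ × ℕ → ℤ) (c : ↥ν.cells) => h c) '' {h | IsSparseFilling ν h} ⊆
      Set.univ.pi (fun _ : ↥ν.cells => ({0, 1, -1} : Set ℤ)) := by
    rintro g ⟨h, hh, rfl⟩ c -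
    rcases hh.2.1 c with h0 | h1 | h2 <;> simp [*]
  refine Set.Finite.of_finite_image (hP.subset himg) ?_
  intro h₁ hm₁ h₂ hm₂ heq
  funext p
  by_cases hp : p ∈ ν.cells
  · exact congrFun heq ⟨p, hp⟩
  · have e₁ : h₁ p = 0 := by by_contra hc; exact hp (hm₁.1 p hc)
    have e₂ : h₂ p = 0 := by by_contra hc; exact hp (hm₂.1 p hc)
    rw [e₁, e₂]

lemma SFSet_finite (ν : YoungDiagram) {k : ℕ} (π : Matrix (Fin k) (Fin k) ℤ)
    (R C : Set ℕ) : (SFSet ν π R C).Finite :=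
  (sparse_finite ν).subset fun _ hh => hh.1

def GoodSupp (ν : YoungDiagram) (R C : Set ℕ) : Prop :=
  R.Finite ∧ C.Finite ∧ (∀ i ∈ R, ∃ j ∈ C, (i, j) ∈ ν.cells) ∧
    (∀ j ∈ C, ∃ i ∈ R, (i, j) ∈ ν.cells)

lemma goodSupp_of_mem {ν : YoungDiagram} {k : ℕ} {π : Matrix (Fin k) (Fin k) ℤ}
    {R C : Set ℕ} {h : ℕ × ℕ → ℤ} (hh : h ∈ SFSet ν π R C) : GoodSupp ν R C := by
  obtain ⟨⟨hsupp, hvals, hrow, hcol⟩, -, hrs, hcs⟩ := hh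
  subst hrs; subst hcs
  refine ⟨?_, ?_, ?_, ?_⟩
  · refine (ν.cells.finite_toSet.image Prod.fst).subset ?_
    rintro i ⟨j, hj⟩
    exact ⟨(i, j), hsupp _ hj, rfl⟩
  · refine (ν.cells.finite_toSet.image Prod.snd).subset ?_
    rintro j ⟨i, hi⟩
    exact ⟨(i, j), hsupp _ hi, rfl⟩
  · rintro i ⟨j, hj⟩
    exact ⟨j, ⟨i, hj⟩, hsupp _ hj⟩
  · rintro j ⟨i, hi⟩
    exact ⟨i, ⟨j, hi⟩, hsupp _ hi⟩

lemma restrict_ncard {k : ℕ} (π : Matrix (Fin k) (Fin k) ℤ) (hπ : IsSignedPermMatrix π)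
    (ν : YoungDiagram) (Rf Cf : Finset ℕ)
    (hgr : ∀ i ∈ Rf, ∃ j ∈ Cf, (i, j) ∈ ν.cells)
    (hgc : ∀ j ∈ Cf, ∃ i ∈ Rf, (i, j) ∈ ν.cells) :
    (SFSet ν π ↑Rf ↑Cf).ncard = (TSet (restrictYD ν Rf Cf) π).ncard := by
  have hinj : Set.InjOn (Dmap Rf Cf) (SFSet ν π ↑Rf ↑Cf) := by
    intro h₁ hm₁ h₂ hm₂ heq
    rw [← Umap_Dmap hm₁, ← Umap_Dmap hm₂, heq]
  have hbij : Set.BijOn (Dmap Rf Cf) (SFSet ν π ↑Rf ↑Cf) (TSet (restrictYD ν Rf Cf) π) := by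
    refine ⟨fun h hh => Dmap_mem_TSet hh, hinj, ?_⟩
    intro T hT
    obtain ⟨hmem, hDU⟩ := Umap_mem_SFSet hπ hgr hgc hT
    exact ⟨Umap Rf Cf T, hmem, hDU⟩
  rw [← hbij.image_eq, Set.ncard_image_of_injOn hinj]

lemma restrict_count {k l : ℕ} (σ : Matrix (Fin k) (Fin k) ℤ)
    (τ : Matrix (Fin l) (Fin l) ℤ) (hσ : IsSignedPermMatrix σ)
    (hτ : IsSignedPermMatrix τ) (heq : ShapeWilfEquiv σ τ)
    (ν : YoungDiagram) (R C : Set ℕ) :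
    (SFSet ν σ R C).ncard = (SFSet ν τ R C).ncard := by
  by_cases hg : GoodSupp ν R C
  · obtain ⟨hR, hC, hgr, hgc⟩ := hg
    have hR' : R = ↑hR.toFinset := hR.coe_toFinset.symm
    have hC' : C = ↑hC.toFinset := hC.coe_toFinset.symm
    rw [hR', hC']
    have hgr' : ∀ i ∈ hR.toFinset, ∃ j ∈ hC.toFinset, (i, j) ∈ ν.cells := by
      intro i hi
      obtain ⟨j, hj, hcell⟩ := hgr i (hR.mem_toFinset.mp hi)
      exact ⟨j, hC.mem_toFinset.mpr hj, hcell⟩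
    have hgc' : ∀ j ∈ hC.toFinset, ∃ i ∈ hR.toFinset, (i, j) ∈ ν.cells := by
      intro j hj
      obtain ⟨i, hi, hcell⟩ := hgc j (hC.mem_toFinset.mp hj)
      exact ⟨i, hR.mem_toFinset.mpr hi, hcell⟩
    rw [restrict_ncard σ hσ ν hR.toFinset hC.toFinset hgr' hgc',
      restrict_ncard τ hτ ν hR.toFinset hC.toFinset hgr' hgc']
    exact heq (restrictYD ν hR.toFinset hC.toFinset)
  · have h1 : SFSet ν σ R C = ∅ :=
      Set.eq_empty_iff_forall_notMem.mpr fun f hf => hg (goodSupp_of_mem hf)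
    have h2 : SFSet ν τ R C = ∅ :=
      Set.eq_empty_iff_forall_notMem.mpr fun f hf => hg (goodSupp_of_mem hf)
    rw [h1, h2]

lemma exists_uv {k l : ℕ} (σ : Matrix (Fin k) (Fin k) ℤ)
    (τ : Matrix (Fin l) (Fin l) ℤ) (hσ : IsSignedPermMatrix σ)
    (hτ : IsSignedPermMatrix τ) (heq : ShapeWilfEquiv σ τ) :
    ∃ u v : (YoungDiagram × Set ℕ × Set ℕ) → (ℕ × ℕ → ℤ) → (ℕ × ℕ → ℤ),
      ∀ t : YoungDiagram × Set ℕ × Set ℕ,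
        (∀ h ∈ SFSet t.1 σ t.2.1 t.2.2,
          u t h ∈ SFSet t.1 τ t.2.1 t.2.2 ∧ v t (u t h) = h) ∧
        (∀ h ∈ SFSet t.1 τ t.2.1 t.2.2,
          v t h ∈ SFSet t.1 σ t.2.1 t.2.2 ∧ u t (v t h) = h) := by
  have key : ∀ t : YoungDiagram × Set ℕ × Set ℕ,
      Nonempty (↥(SFSet t.1 σ t.2.1 t.2.2) ≃ ↥(SFSet t.1 τ t.2.1 t.2.2)) := by
    intro t
    have h1 := SFSet_finite t.1 σ t.2.1 t.2.2
    have h2 := SFSet_finite t.1 τ t.2.1 t.2.2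
    have := h1.to_subtype
    have := h2.to_subtype
    apply Finite.card_eq.mp
    rw [Nat.card_coe_set_eq, Nat.card_coe_set_eq]
    exact restrict_count σ τ hσ hτ heq t.1 t.2.1 t.2.2
  have e : ∀ t : YoungDiagram × Set ℕ × Set ℕ,
      ↥(SFSet t.1 σ t.2.1 t.2.2) ≃ ↥(SFSet t.1 τ t.2.1 t.2.2) :=
    fun t => Classical.choice (key t)
  refine ⟨fun t h => if hh : h ∈ SFSet t.1 σ t.2.1 t.2.2 then ((e t) ⟨h, hh⟩ : ℕ × ℕ → ℤ)
      else h,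
    fun t h => if hh : h ∈ SFSet t.1 τ t.2.1 t.2.2 then ((e t).symm ⟨h, hh⟩ : ℕ × ℕ → ℤ)
      else h, ?_⟩
  intro t
  constructor
  · intro h hh
    simp only [dif_pos hh]
    refine ⟨((e t) ⟨h, hh⟩).2, ?_⟩
    simp only [dif_pos ((e t) ⟨h, hh⟩).2, Subtype.coe_eta, Equiv.symm_apply_apply]
  · intro h hh
    simp only [dif_pos hh]
    refine ⟨((e t).symm ⟨h, hh⟩).2, ?_⟩
    simp only [dif_pos ((e t).symm ⟨h, hh⟩).2, Subtype.coe_eta, Equiv.apply_symm_apply]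

end

end BW

namespace BW

open scoped Classical

noncomputable section

variable {m : ℕ}

def BigSet (μ : YoungDiagram) {k : ℕ} (θ : Matrix (Fin k) (Fin k) ℤ) (R C : Set ℕ) :
    Set (ℕ × ℕ → ℤ) :=
  {f | IsSparseFilling μ f ∧ ¬ YDContains μ f θ ∧ rowsupp f = R ∧ colsupp f = C}

def tOf (χ : Matrix (Fin m) (Fin m) ℤ) (μ : YoungDiagram) (f : ℕ × ℕ → ℤ) :
    YoungDiagram × Set ℕ × Set ℕ :=
  (whiteYD χ μ f, rowsupp (whitePart χ μ f), colsupp (whitePart χ μ f))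

def stepMap (χ : Matrix (Fin m) (Fin m) ℤ) (μ : YoungDiagram)
    (u : (YoungDiagram × Set ℕ × Set ℕ) → (ℕ × ℕ → ℤ) → (ℕ × ℕ → ℤ))
    (f : ℕ × ℕ → ℤ) : ℕ × ℕ → ℤ :=
  combine χ μ f (u (tOf χ μ f) (whitePart χ μ f))

lemma step_lemma {a k : ℕ} (χ₁ : Matrix (Fin a) (Fin a) ℤ)
    (χ₂ : Matrix (Fin k) (Fin k) ℤ) (χ : Matrix (Fin m) (Fin m) ℤ)
    (ha : 0 < a) (hk : 0 < k)
    (h1 : IsSignedPermMatrix χ₁) (h2 : IsSignedPermMatrix χ₂)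
    (μ : YoungDiagram) (R C : Set ℕ)
    (u v : (YoungDiagram × Set ℕ × Set ℕ) → (ℕ × ℕ → ℤ) → (ℕ × ℕ → ℤ))
    (huv : ∀ t, ∀ h ∈ SFSet t.1 χ₁ t.2.1 t.2.2,
      u t h ∈ SFSet t.1 χ₂ t.2.1 t.2.2 ∧ v t (u t h) = h)
    (f : ℕ × ℕ → ℤ) (hf : f ∈ BigSet μ (blockDiag2 χ₁ χ) R C) :
    stepMap χ μ u f ∈ BigSet μ (blockDiag2 χ₂ χ) R C ∧
      stepMap χ μ v (stepMap χ μ u f) = f := by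
  obtain ⟨hsf, havoid, hrs, hcs⟩ := hf
  have hwp : whitePart χ μ f ∈ SFSet (whiteYD χ μ f) χ₁
      (rowsupp (whitePart χ μ f)) (colsupp (whitePart χ μ f)) :=
    ⟨whitePart_sparse hsf,
      fun hc => havoid ((contains_blockDiag2_iff χ₁ ha h1 hsf).mpr hc), rfl, rfl⟩
  obtain ⟨humem, hvu⟩ := huv (tOf χ μ f) (whitePart χ μ f) hwp
  set h'' := u (tOf χ μ f) (whitePart χ μ f) with hh''
  obtain ⟨hsf'', havoid'', hrs'', hcs''⟩ := humem
  have hrepl : Repl χ μ f h'' := repl_of_sparse hsf'' hrs'' hcs''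
  obtain ⟨hsf', hrs', hcs'⟩ := combine_sparse hsf hrepl
  have hwY : whiteYD χ μ (combine χ μ f h'') = whiteYD χ μ f := whiteYD_combine χ μ f h''
  have hwP : whitePart χ μ (combine χ μ f h'') = h'' := whitePart_combine hrepl
  have htOf : tOf χ μ (combine χ μ f h'') = tOf χ μ f := by
    unfold tOf
    rw [hwY, hwP, hrs'', hcs'']
    rfl
  constructor
  · refine ⟨hsf', ?_, hrs'.trans hrs, hcs'.trans hcs⟩
    intro hc
    have hcon := (contains_blockDiag2_iff χ₂ hk h2 hsf').mp hc
    rw [hwY, hwP] at hcon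
    exact havoid'' hcon
  · show combine χ μ (combine χ μ f h'')
      (v (tOf χ μ (combine χ μ f h'')) (whitePart χ μ (combine χ μ f h''))) = f
    rw [htOf, hwP, hvu]
    funext p
    by_cases hw : p ∈ White χ μ f
    · rw [combine_eq_of_mem (by rw [white_combine]; exact hw), whitePart_eq_of_mem hw]
    · rw [combine_eq_of_notMem (by rw [white_combine]; exact hw),
        combine_eq_of_notMem hw]

lemma main_count {a b : ℕ} (χ₁ : Matrix (Fin a) (Fin a) ℤ)
    (χ₂ : Matrix (Fin b) (Fin b) ℤ) (χ : Matrix (Fin m) (Fin m) ℤ)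
    (ha : 0 < a) (hb : 0 < b)
    (h1 : IsSignedPermMatrix χ₁) (h2 : IsSignedPermMatrix χ₂)
    (heq : ShapeWilfEquiv χ₁ χ₂) (μ : YoungDiagram) (R C : Set ℕ) :
    (BigSet μ (blockDiag2 χ₁ χ) R C).ncard = (BigSet μ (blockDiag2 χ₂ χ) R C).ncard := by
  obtain ⟨u, v, huv⟩ := exists_uv χ₁ χ₂ h1 h2 heq
  have hfor := step_lemma χ₁ χ₂ χ ha hb h1 h2 μ R C u v (fun t => (huv t).1)
  have hback := step_lemma χ₂ χ₁ χ hb ha h2 h1 μ R C v u (fun t => (huv t).2)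
  have hinj : Set.InjOn (stepMap χ μ u) (BigSet μ (blockDiag2 χ₁ χ) R C) := by
    intro f₁ hm₁ f₂ hm₂ heqf
    rw [← (hfor f₁ hm₁).2, ← (hfor f₂ hm₂).2, heqf]
  have hbij : Set.BijOn (stepMap χ μ u) (BigSet μ (blockDiag2 χ₁ χ) R C)
      (BigSet μ (blockDiag2 χ₂ χ) R C) := by
    refine ⟨fun f hf => (hfor f hf).1, hinj, ?_⟩
    intro g hg
    exact ⟨stepMap χ μ v g, (hback g hg).1, (hback g hg).2⟩
  rw [← hbij.image_eq, Set.ncard_image_of_injOn hinj]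

lemma trivial_occ_bot {k : ℕ} (π : Matrix (Fin k) (Fin k) ℤ) (hk : 0 < k)
    {f : ℕ × ℕ → ℤ} : ¬ YDContains ⊥ f π := by
  rintro ⟨r, c, -, -, hcell, -⟩
  have := hcell ⟨0, hk⟩ ⟨0, hk⟩
  rw [YoungDiagram.cells_bot] at this
  exact absurd this (Finset.notMem_empty _)

lemma bot_count_pos {k : ℕ} (π : Matrix (Fin k) (Fin k) ℤ) (hk : 0 < k) :
    {f : ℕ × ℕ → ℤ | IsSignedTransversal ⊥ f ∧ ¬ YDContains ⊥ f π}.ncard = 1 := by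
  have hset : {f : ℕ × ℕ → ℤ | IsSignedTransversal ⊥ f ∧ ¬ YDContains ⊥ f π} =
      {fun _ => (0 : ℤ)} := by
    ext f
    simp only [Set.mem_setOf_eq, Set.mem_singleton_iff]
    constructor
    · rintro ⟨⟨⟨hsupp, -, -, -⟩, -, -⟩, -⟩
      funext p
      by_contra hc
      have := hsupp p hc
      rw [YoungDiagram.cells_bot] at this
      exact absurd this (Finset.notMem_empty p)
    · rintro rfl
      refine ⟨⟨⟨fun p hp => absurd rfl hp, fun p => Or.inl rfl,
        fun i j₁ hj₁ _ _ => absurd rfl hj₁, fun j i₁ hi₁ _ _ => absurd rfl hi₁⟩,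
        ?_, ?_⟩, trivial_occ_bot π hk⟩
      · rintro i ⟨j, hj⟩
        rw [YoungDiagram.cells_bot] at hj
        exact absurd hj (Finset.notMem_empty _)
      · rintro j ⟨i, hi⟩
        rw [YoungDiagram.cells_bot] at hi
        exact absurd hi (Finset.notMem_empty _)
  rw [hset, Set.ncard_singleton]

lemma bot_count_zero (π : Matrix (Fin 0) (Fin 0) ℤ) :
    {f : ℕ × ℕ → ℤ | IsSignedTransversal ⊥ f ∧ ¬ YDContains ⊥ f π}.ncard = 0 := by
  have hset : {f : ℕ × ℕ → ℤ | IsSignedTransversal ⊥ f ∧ ¬ YDContains ⊥ f π} = ∅ := by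
    ext f
    simp only [Set.mem_setOf_eq, Set.mem_empty_iff_false, iff_false, not_and]
    intro hf hn
    refine hn ⟨Fin.elim0, Fin.elim0, fun x => x.elim0, fun x => x.elim0,
      fun x => x.elim0, fun x => x.elim0⟩
  rw [hset, Set.ncard_empty]

lemma transversal_set_eq (μ : YoungDiagram) {k : ℕ} (θ : Matrix (Fin k) (Fin k) ℤ) :
    {f : ℕ × ℕ → ℤ | IsSignedTransversal μ f ∧ ¬ YDContains μ f θ} =
      BigSet μ θ {i | ∃ j, (i, j) ∈ μ.cells} {j | ∃ i, (i, j) ∈ μ.cells} := by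
  ext f
  simp only [Set.mem_setOf_eq, BigSet]
  constructor
  · rintro ⟨⟨hsf, htr, htc⟩, hav⟩
    refine ⟨hsf, hav, ?_, ?_⟩
    · ext i
      exact ⟨fun ⟨j, hj⟩ => ⟨j, hsf.1 _ hj⟩, htr i⟩
    · ext j
      exact ⟨fun ⟨i, hi⟩ => ⟨i, hsf.1 _ hi⟩, htc j⟩
  · rintro ⟨hsf, hav, hrs, hcs⟩
    refine ⟨⟨hsf, ?_, ?_⟩, hav⟩
    · intro i hi
      have : i ∈ rowsupp f := by rw [hrs]; exact hi
      exact this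
    · intro j hj
      have : j ∈ colsupp f := by rw [hcs]; exact hj
      exact this

end

end BW

/-- if χ₁ and χ₂ are shape Wilf equivalent signed permutation matrices
and χ is any signed permutation matrix, then for every Young diagram λ and prescribed
sets R of nonzero rows and C of nonzero columns, the [[χ₁,0],[0,χ]]-avoiding sparse
fillings with that row/column support are equinumerous with the [[χ₂,0],[0,χ]]-avoiding
ones; in particular the two block patterns are shape Wilf equivalent. -/
theorem stmt0 {a b m : ℕ} (χ₁ : Matrix (Fin a) (Fin a) ℤ) (χ₂ : Matrix (Fin b) (Fin b) ℤ)
    (χ : Matrix (Fin m) (Fin m) ℤ)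
    (h1 : IsSignedPermMatrix χ₁) (h2 : IsSignedPermMatrix χ₂) (hχ : IsSignedPermMatrix χ)
    (heq : ShapeWilfEquiv χ₁ χ₂) :
    (∀ (μ : YoungDiagram) (R C : Set ℕ),
      {f : ℕ × ℕ → ℤ | IsSparseFilling μ f ∧ ¬ YDContains μ f (blockDiag2 χ₁ χ) ∧
        {i | ∃ j, f (i, j) ≠ 0} = R ∧ {j | ∃ i, f (i, j) ≠ 0} = C}.ncard =
      {f : ℕ × ℕ → ℤ | IsSparseFilling μ f ∧ ¬ YDContains μ f (blockDiag2 χ₂ χ) ∧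
        {i | ∃ j, f (i, j) ≠ 0} = R ∧ {j | ∃ i, f (i, j) ≠ 0} = C}.ncard) ∧
    ShapeWilfEquiv (blockDiag2 χ₁ χ) (blockDiag2 χ₂ χ) := by
  rcases Nat.eq_zero_or_pos a with ha0 | ha
  · rcases Nat.eq_zero_or_pos b with hb0 | hb
    · subst ha0; subst hb0
      have hmat : χ₁ = χ₂ := Matrix.ext fun i => i.elim0
      subst hmat
      exact ⟨fun μ R C => rfl, fun μ => rfl⟩
    · exfalso
      subst ha0
      have hL := heq ⊥
      rw [BW.bot_count_zero χ₁, BW.bot_count_pos χ₂ hb] at hL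
      exact absurd hL (by norm_num)
  · rcases Nat.eq_zero_or_pos b with hb0 | hb
    · exfalso
      subst hb0
      have hL := heq ⊥
      rw [BW.bot_count_pos χ₁ ha, BW.bot_count_zero χ₂] at hL
      exact absurd hL (by norm_num)
    · have part1 : ∀ (μ : YoungDiagram) (R C : Set ℕ),
          (BW.BigSet μ (blockDiag2 χ₁ χ) R C).ncard =
          (BW.BigSet μ (blockDiag2 χ₂ χ) R C).ncard :=
        fun μ R C => BW.main_count χ₁ χ₂ χ ha hb h1 h2 heq μ R C
      refine ⟨fun μ R C => part1 μ R C, fun μ => ?_⟩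
      rw [BW.transversal_set_eq μ (blockDiag2 χ₁ χ), BW.transversal_set_eq μ (blockDiag2 χ₂ χ)]
      exact part1 μ _ _
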